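/- Let N ≥ 2, ε ∈ ℝ, and q₁, …, q_N ∈ ℝ² be pairwise distinct, and set q₀ := −ε(q₁ + ⋯ + q_N). Fix j with 1 ≤ j ≤ N and suppose qⱼ ≠ q₀. Then qⱼ · ( (qⱼ − q₀)^⊥/|qⱼ − q₀|² + ε·∑_{i≠j} (qⱼ − qᵢ)^⊥/|qⱼ − qᵢ|² ) = ε·∑_{i≠j} (qⱼ · qᵢ^⊥)·( 1/|qⱼ − q₀|² − 1/|qⱼ − qᵢ|² ), where (x,y)^⊥ := (−y, x) and · denotes the Euclidean dot product on ℝ². -/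

import Mathlib

open Finset

/-- Rotation by `π/2` in the plane: `(x,y)^⊥ = (-y,x)`. -/
def perp (p : ℝ × ℝ) : ℝ × ℝ := (-p.2, p.1)

/-- Euclidean dot product on `ℝ²`. -/
def dot (p q : ℝ × ℝ) : ℝ := p.1 * q.1 + p.2 * q.2

lemma dot_perp_sub (p r : ℝ × ℝ) : dot p (perp (p - r)) = - dot p (perp r) := by
  simp [dot, perp]; ring

lemma dot_perp_sum {α : Type*} (p : ℝ × ℝ) (s : Finset α) (f : α → ℝ × ℝ) :
    dot p (perp (∑ i ∈ s, f i)) = ∑ i ∈ s, dot p (perp (f i)) := by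
  classical
  induction s using Finset.induction_on with
  | empty => simp [dot, perp]
  | insert _ _ h ih =>
      rw [Finset.sum_insert h, Finset.sum_insert h, ← ih]
      simp [dot, perp]; ring

/-- With `q₀ = -ε(q₁ + ⋯ + q_N)` and pairwise distinct `q₁,…,q_N`,
for any `j` with `qⱼ ≠ q₀`,
`qⱼ · ((qⱼ-q₀)^⊥/|qⱼ-q₀|² + ε ∑_{i≠j} (qⱼ-qᵢ)^⊥/|qⱼ-qᵢ|²)
  = ε ∑_{i≠j} (qⱼ·qᵢ^⊥)·(1/|qⱼ-q₀|² - 1/|qⱼ-qᵢ|²)`. -/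
theorem radial_velocity_identity (N : ℕ) (hN : 2 ≤ N) (ε : ℝ)
    (q : Fin N → ℝ × ℝ) (hdist : ∀ i j : Fin N, i ≠ j → q i ≠ q j)
    (q0 : ℝ × ℝ) (hq0 : q0 = -ε • ∑ i : Fin N, q i)
    (j : Fin N) (hj : q j ≠ q0) :
    dot (q j)
      ((dot (q j - q0) (q j - q0))⁻¹ • perp (q j - q0) +
        ε • ∑ i ∈ Finset.univ.erase j,
          (dot (q j - q i) (q j - q i))⁻¹ • perp (q j - q i))
    = ε * ∑ i ∈ Finset.univ.erase j,
        dot (q j) (perp (q i)) *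
          (1 / dot (q j - q0) (q j - q0) - 1 / dot (q j - q i) (q j - q i)) := by
  classical
  set s := Finset.univ.erase j with hs
  set A : ℝ := (dot (q j - q0) (q j - q0))⁻¹ with hA
  set c : Fin N → ℝ := fun i => dot (q j) (perp (q i)) with hc
  set B : Fin N → ℝ := fun i => (dot (q j - q i) (q j - q i))⁻¹ with hB
  -- first key: dot (q j) (perp (q j - q0)) = ε * ∑ i ∈ s, c i
  have h1 : dot (q j) (perp (q j - q0)) = ε * ∑ i ∈ s, c i := by
    rw [dot_perp_sub, hq0]
    have hperp : perp ((-ε) • ∑ i : Fin N, q i) = (-ε) • perp (∑ i : Fin N, q i) := by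
      simp [perp, Prod.smul_def]
    have hdotsmul : ∀ (a : ℝ) (x : ℝ × ℝ), dot (q j) (a • x) = a * dot (q j) x := by
      intro a x; simp [dot, Prod.smul_def]; ring
    rw [hperp, hdotsmul, dot_perp_sum]
    have hcj : c j = 0 := by simp [hc, dot, perp]; ring
    have : ∑ i : Fin N, dot (q j) (perp (q i)) = ∑ i ∈ s, c i := by
      rw [hs, hc]
      exact (Finset.sum_erase _ hcj).symm
    rw [this]; ring
  -- second key: dot (q j) (perp (q j - q i)) = - c i
  have h2 : ∀ i : Fin N, dot (q j) (perp (q j - q i)) = - c i := fun i => dot_perp_sub _ _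
  -- expand the LHS
  have hadd : ∀ x y : ℝ × ℝ, dot (q j) (x + y) = dot (q j) x + dot (q j) y := by
    intro x y; simp [dot]; ring
  have hdotsmul : ∀ (a : ℝ) (x : ℝ × ℝ), dot (q j) (a • x) = a * dot (q j) x := by
    intro a x; simp [dot, Prod.smul_def]; ring
  have hdotsum : ∀ (f : Fin N → ℝ × ℝ),
      dot (q j) (∑ i ∈ s, f i) = ∑ i ∈ s, dot (q j) (f i) := by
    intro f
    simp only [dot, Prod.fst_sum, Prod.snd_sum, Finset.mul_sum, Finset.sum_add_distrib]
  rw [hadd, hdotsmul, hdotsmul, hdotsum, h1]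
  have hsum2 : ∑ i ∈ s, dot (q j) ((dot (q j - q i) (q j - q i))⁻¹ • perp (q j - q i))
      = ∑ i ∈ s, B i * (- c i) := by
    refine Finset.sum_congr rfl fun i _ => ?_
    rw [hdotsmul, h2 i]
  rw [hsum2]
  have hr : ∀ i : Fin N, c i * (1 / dot (q j - q0) (q j - q0) - 1 / dot (q j - q i) (q j - q i))
      = c i * A - c i * B i := by
    intro i; rw [hA, hB]; ring
  have e2 : ∑ i ∈ s, B i * (- c i) = - ∑ i ∈ s, c i * B i := by
    rw [← Finset.sum_neg_distrib]
    exact Finset.sum_congr rfl fun i _ => by ring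
  rw [e2]
  have e3 : ∑ i ∈ s, c i *
      (1 / dot (q j - q0) (q j - q0) - 1 / dot (q j - q i) (q j - q i))
      = ∑ i ∈ s, (c i * A - c i * B i) :=
    Finset.sum_congr rfl fun i _ => hr i
  rw [e3, Finset.sum_sub_distrib, ← Finset.sum_mul]
  ring
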